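/- Let Ω be a type, K ≥ N ≥ 1 natural numbers, and φ : Fin K → (Ω → ℂ) a linearly independent family of functions. Suppose f : (Fin N → Ω) → ℂ is antisymmetric, not identically zero, and admits a representation f(r) = ∑_{i=1}^p ∏_j ψ(i)(j)(r(j)) where each ψ(i)(j) lies in the ℂ-span of {φ_1, …, φ_K}. Then p ≥ sInf { rank_cp(Y) : Y is a nonzero antisymmetric N-th order tensor of dimension K over ℂ }. -/
import Mathlib


open scoped BigOperators

/-- The CP (canonical polyadic) rank of an `N`-th order tensor of dimension `K` over `ℂ`:
the least `p` such that the tensor is a sum of `p` elementary tensor products. -/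
noncomputable def cpRank {N K : ℕ} (X : (Fin N → Fin K) → ℂ) : ℕ :=
  sInf {p : ℕ | ∃ x : Fin p → Fin N → Fin K → ℂ,
    ∀ k : Fin N → Fin K, X k = ∑ i, ∏ j, x i j (k j)}

/-- An `N`-th order tensor is antisymmetric if it changes sign under any permutation
of its indices according to the sign of the permutation. -/
def IsAntisymTensor {N K : ℕ} (X : (Fin N → Fin K) → ℂ) : Prop :=
  ∀ (π : Equiv.Perm (Fin N)) (k : Fin N → Fin K),
    X (k ∘ π) = ((Equiv.Perm.sign π : ℤ) : ℂ) * X k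

/-- The determinant tensor: `E ℓ = sgn ℓ` if `ℓ` is a permutation of `Fin N`, `0` otherwise. -/
noncomputable def detTensor (N : ℕ) : (Fin N → Fin N) → ℂ :=
  fun ℓ => ∑ π : Equiv.Perm (Fin N),
    if ℓ = ⇑π then ((Equiv.Perm.sign π : ℤ) : ℂ) else 0

/-- The basis antisymmetric tensor associated with `u : Fin N → Fin K`:
`E_u ℓ = sgn π` if `ℓ = u ∘ π` for a (necessarily unique, when `u` is injective)
permutation `π` of `Fin N`, and `0` otherwise. -/
noncomputable def basisTensor {N K : ℕ} (u : Fin N → Fin K) : (Fin N → Fin K) → ℂ :=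
  fun ℓ => ∑ π : Equiv.Perm (Fin N),
    if ℓ = u ∘ ⇑π then ((Equiv.Perm.sign π : ℤ) : ℂ) else 0

/-- A function on `N`-tuples is antisymmetric if it changes sign under any permutation
of its arguments according to the sign of the permutation. -/
def IsAntisymFun {N : ℕ} {Ω : Type*} (f : (Fin N → Ω) → ℂ) : Prop :=
  ∀ (π : Equiv.Perm (Fin N)) (r : Fin N → Ω),
    f (r ∘ π) = ((Equiv.Perm.sign π : ℤ) : ℂ) * f r

/-- Products of linearly independent functions are linearly independent (coefficient form). -/
lemma prod_li {Ω : Type*} {K : ℕ} {φ : Fin K → Ω → ℂ} (hφ : LinearIndependent ℂ φ) :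
    ∀ (N : ℕ) (a : (Fin N → Fin K) → ℂ),
      (∀ r : Fin N → Ω, ∑ k : Fin N → Fin K, a k * ∏ j, φ (k j) (r j) = 0) → ∀ k, a k = 0 := by
  intro N
  induction N with
  | zero =>
    intro a h k
    have h0 := h (fun i => i.elim0)
    simpa [Finset.univ_unique, Subsingleton.elim k default] using h0
  | succ n ih =>
    intro a h k
    have key : ∀ (m : Fin K) (k' : Fin n → Fin K), a (Fin.cons m k') = 0 := by
      intro m
      apply ih (fun k' => a (Fin.cons m k'))
      intro r'
      have hg : ∀ ω : Ω,
          ∑ mm : Fin K,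
            (∑ k' : Fin n → Fin K, a (Fin.cons mm k') * ∏ j, φ (k' j) (r' j)) • φ mm ω = 0 := by
        intro ω
        have h1 := h (Fin.cons ω r')
        rw [← Fintype.sum_equiv (Fin.consEquiv (fun _ => Fin K))
            (fun q : Fin K × (Fin n → Fin K) =>
              a (Fin.cons q.1 q.2) * ∏ j, φ ((Fin.cons q.1 q.2 : Fin (n+1) → Fin K) j)
                ((Fin.cons ω r' : Fin (n+1) → Ω) j))
            (fun kk : Fin (n+1) → Fin K =>
              a kk * ∏ j, φ (kk j) ((Fin.cons ω r' : Fin (n+1) → Ω) j))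
            (fun q => rfl)] at h1
        rw [Fintype.sum_prod_type] at h1
        rw [← h1]
        apply Finset.sum_congr rfl
        intro mm _
        rw [Finset.sum_smul]
        apply Finset.sum_congr rfl
        intro k' _
        rw [smul_eq_mul, Fin.prod_univ_succ]
        simp only [Fin.cons_zero, Fin.cons_succ]
        ring
      have hli := Fintype.linearIndependent_iff.mp hφ
        (fun mm => ∑ k' : Fin n → Fin K, a (Fin.cons mm k') * ∏ j, φ (k' j) (r' j))
      have hz : (∑ mm : Fin K, (∑ k' : Fin n → Fin K,
          a (Fin.cons mm k') * ∏ j, φ (k' j) (r' j)) • φ mm) = 0 := by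
        funext ω
        simpa using hg ω
      exact hli hz m
    have hk : a k = a (Fin.cons (k 0) (Fin.tail k)) := by rw [Fin.cons_self_tail]
    rw [hk]; exact key _ _

theorem tpf_rank_ge_min_cpRank {Ω : Type*} {K N : ℕ} (hN : 1 ≤ N) (hKN : N ≤ K)
    (φ : Fin K → Ω → ℂ) (hφ : LinearIndependent ℂ φ)
    (f : (Fin N → Ω) → ℂ) (hanti : IsAntisymFun f) (hf0 : f ≠ 0)
    {p : ℕ} (ψ : Fin p → Fin N → Ω → ℂ)
    (hspan : ∀ i j, ψ i j ∈ Submodule.span ℂ (Set.range φ))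
    (hrep : ∀ r : Fin N → Ω, f r = ∑ i, ∏ j, ψ i j (r j)) :
    sInf {q : ℕ | ∃ Y : (Fin N → Fin K) → ℂ,
        IsAntisymTensor Y ∧ Y ≠ 0 ∧ cpRank Y = q} ≤ p := by
  choose c hc using fun i j => (Submodule.mem_span_range_iff_exists_fun ℂ).mp (hspan i j)
  set X : (Fin N → Fin K) → ℂ := fun k => ∑ i, ∏ j, c i j (k j) with hX
  have hXf : ∀ r : Fin N → Ω, f r = ∑ k : Fin N → Fin K, X k * ∏ j, φ (k j) (r j) := by
    intro r
    rw [hrep]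
    have step1 : ∀ i, (∏ j, ψ i j (r j)) =
        ∑ k : Fin N → Fin K, ∏ j, (c i j (k j) * φ (k j) (r j)) := by
      intro i
      have hψ : ∀ j, ψ i j (r j) = ∑ m : Fin K, c i j m * φ m (r j) := by
        intro j
        rw [← hc i j]
        simp
      simp_rw [hψ]
      rw [Finset.prod_univ_sum]
      rw [Fintype.piFinset_univ]
    simp_rw [step1, Finset.prod_mul_distrib]
    rw [Finset.sum_comm]
    apply Finset.sum_congr rfl
    intro k _
    rw [hX, Finset.sum_mul]
  have key : ∀ a : (Fin N → Fin K) → ℂ,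
      (∀ r : Fin N → Ω, ∑ k : Fin N → Fin K, a k * ∏ j, φ (k j) (r j) = 0) → ∀ k, a k = 0 :=
    prod_li hφ N
  have hanti' : IsAntisymTensor X := by
    intro π k
    have hz := key (fun k => X (k ∘ π) - ((Equiv.Perm.sign π : ℤ) : ℂ) * X k) ?_ k
    · exact sub_eq_zero.mp hz
    · intro r
      have h1 : ∑ k : Fin N → Fin K, X (k ∘ π) * ∏ j, φ (k j) (r j) = f (r ∘ π) := by
        rw [hXf (r ∘ π)]
        refine Fintype.sum_equiv (Equiv.arrowCongr π.symm (Equiv.refl (Fin K)))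
          (fun k => X (k ∘ π) * ∏ j, φ (k j) (r j))
          (fun k => X k * ∏ j, φ (k j) ((r ∘ π) j)) (fun k => ?_)
        show X (k ∘ π) * ∏ j, φ (k j) (r j) =
          X ((Equiv.arrowCongr π.symm (Equiv.refl (Fin K))) k) *
            ∏ j, φ (((Equiv.arrowCongr π.symm (Equiv.refl (Fin K))) k) j) ((r ∘ π) j)
        have he : (Equiv.arrowCongr π.symm (Equiv.refl (Fin K))) k = k ∘ π := rfl
        rw [he]
        congr 1
        exact (Equiv.prod_comp π fun j => φ (k j) (r j)).symm
      have h2 : ∑ k : Fin N → Fin K,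
          (X (k ∘ π) - ((Equiv.Perm.sign π : ℤ) : ℂ) * X k) * ∏ j, φ (k j) (r j)
          = f (r ∘ π) - ((Equiv.Perm.sign π : ℤ) : ℂ) * f r := by
        simp_rw [sub_mul, Finset.sum_sub_distrib, mul_assoc, ← Finset.mul_sum]
        rw [h1, ← hXf r]
      rw [h2, hanti π r, sub_self]
  have hX0 : X ≠ 0 := by
    intro h
    apply hf0
    funext r
    rw [hXf r]
    simp [congrFun h]
  have hcp : cpRank X ≤ p := Nat.sInf_le ⟨c, fun k => rfl⟩
  exact le_trans (Nat.sInf_le ⟨X, hanti', hX0, rfl⟩) hcp
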